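/- arXiv:2503.00538 — 3 statements merged into one kernel-verified Lean document; each statement's English description precedes it below -/
import Mathlib

section
/- For all a, b, c > 0 and all p ∈ ℕ and all λ₁²,…,λ_p² > 0: ∫₀^∞ t^{p/2+a-1}/(c+t)^{a+b} · ∏_{k=1}^p 1/(λ_k²+t) dt = ∫₀^∞ t^{p/2+a-1}/(c+t)^{a+b} · ∏_{k=1}^p 1/(λ_k²+t) · (t/(p/2+a)) · ( (a+b)/(c+t) + Σ_{k=1}^p 1/(λ_k²+t) ) dt. -/
open MeasureTheory Set Filter Real Topology

namespace Stmt2Aux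

/-- Integrability on `Ioi 0` from power bounds near `0` and `∞`. -/
lemma aux_integrable {f : ℝ → ℝ}
    (hf : AEStronglyMeasurable f (volume.restrict (Set.Ioi (0:ℝ))))
    {s r C1 C2 : ℝ} (hs : -1 < s) (hr : r < -1)
    (h1 : ∀ t ∈ Set.Ioc (0:ℝ) 1, |f t| ≤ C1 * t ^ s)
    (h2 : ∀ t ∈ Set.Ioi (1:ℝ), |f t| ≤ C2 * t ^ r) :
    IntegrableOn f (Set.Ioi (0:ℝ)) := by
  have union : Set.Ioc (0:ℝ) 1 ∪ Set.Ioi 1 = Set.Ioi 0 := Set.Ioc_union_Ioi_eq_Ioi zero_le_one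
  rw [← union]
  apply IntegrableOn.union
  · have base : IntegrableOn (fun t : ℝ => t ^ s) (Set.Ioc (0:ℝ) 1) :=
      (intervalIntegrable_iff_integrableOn_Ioc_of_le zero_le_one).1
        (intervalIntegral.intervalIntegrable_rpow' hs)
    have hdom := base.const_mul C1
    refine hdom.mono' (hf.mono_measure (Measure.restrict_mono
      (by rw [← union]; exact Set.subset_union_left) le_rfl)) ?_
    rw [ae_restrict_iff' measurableSet_Ioc]
    exact ae_of_all _ fun t ht => by simpa [Real.norm_eq_abs] using h1 t ht
  · have hdom : IntegrableOn (fun t : ℝ => C2 * t ^ r) (Set.Ioi (1:ℝ)) :=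
      (integrableOn_Ioi_rpow_of_lt hr one_pos).const_mul _
    refine hdom.mono' (hf.mono_measure (Measure.restrict_mono
      (by rw [← union]; exact Set.subset_union_right) le_rfl)) ?_
    rw [ae_restrict_iff' measurableSet_Ioi]
    exact ae_of_all _ fun t ht => by simpa [Real.norm_eq_abs] using h2 t ht

noncomputable def Phi {p : ℕ} (lam : Fin p → ℝ) (t : ℝ) : ℝ := ∏ k, (lam k + t)⁻¹

noncomputable def Sm {p : ℕ} (lam : Fin p → ℝ) (t : ℝ) : ℝ := ∑ k, (lam k + t)⁻¹

noncomputable def Ff (a b c q : ℝ) {p : ℕ} (lam : Fin p → ℝ) (t : ℝ) : ℝ :=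
  t ^ q / (c + t) ^ (a + b) * Phi lam t

variable {p : ℕ} {lam : Fin p → ℝ} {a b c q : ℝ}

lemma Phi_pos (hlam : ∀ k, 0 < lam k) {t : ℝ} (ht : 0 ≤ t) : 0 < Phi lam t :=
  Finset.prod_pos fun k _ => inv_pos.2 (add_pos_of_pos_of_nonneg (hlam k) ht)

lemma Sm_nonneg (hlam : ∀ k, 0 < lam k) {t : ℝ} (ht : 0 ≤ t) : 0 ≤ Sm lam t :=
  Finset.sum_nonneg fun k _ => (inv_pos.2 (add_pos_of_pos_of_nonneg (hlam k) ht)).le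

lemma Phi_le (hlam : ∀ k, 0 < lam k) {t : ℝ} (ht : 0 ≤ t) : Phi lam t ≤ Phi lam 0 := by
  refine Finset.prod_le_prod (fun k _ => (inv_pos.2 (add_pos_of_pos_of_nonneg (hlam k) ht)).le)
    (fun k _ => ?_)
  rw [add_zero]
  exact inv_anti₀ (hlam k) (le_add_of_nonneg_right ht)

lemma Phi_le_rpow (hlam : ∀ k, 0 < lam k) {t : ℝ} (ht : 0 < t) :
    Phi lam t ≤ t ^ (-(p:ℝ)) := by
  have : Phi lam t ≤ ∏ _k : Fin p, t⁻¹ := by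
    refine Finset.prod_le_prod (fun k _ => (inv_pos.2 (add_pos_of_pos_of_nonneg (hlam k) ht.le)).le)
      (fun k _ => inv_anti₀ ht (le_add_of_nonneg_left (hlam k).le))
  refine this.trans_eq ?_
  rw [Finset.prod_const, Finset.card_univ, Fintype.card_fin, Real.rpow_neg ht.le,
    Real.rpow_natCast, ← inv_pow]

lemma Phi_contAt (hlam : ∀ k, 0 < lam k) {t : ℝ} (ht : 0 ≤ t) : ContinuousAt (Phi lam) t := by
  apply tendsto_finset_prod
  intro k _
  exact (continuousAt_const.add continuousAt_id).inv₀
    (add_pos_of_pos_of_nonneg (hlam k) ht).ne'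

lemma Sm_contAt (hlam : ∀ k, 0 < lam k) {t : ℝ} (ht : 0 ≤ t) : ContinuousAt (Sm lam) t := by
  apply tendsto_finset_sum
  intro k _
  exact (continuousAt_const.add continuousAt_id).inv₀
    (add_pos_of_pos_of_nonneg (hlam k) ht).ne'

lemma Phi_hasDerivAt (hlam : ∀ k, 0 < lam k) {t : ℝ} (ht : 0 ≤ t) :
    HasDerivAt (Phi lam) (-(Phi lam t * Sm lam t)) t := by
  classical
  have hk : ∀ k ∈ (Finset.univ : Finset (Fin p)),
      HasDerivAt (fun u : ℝ => (lam k + u)⁻¹) (-1 / (lam k + t) ^ 2) t := by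
    intro k _
    simpa [Pi.inv_def] using ((hasDerivAt_id t).const_add (lam k)).inv
      (add_pos_of_pos_of_nonneg (hlam k) ht).ne'
  have hp := HasDerivAt.finset_prod hk
  convert hp using 1
  case e'_4 => rfl
  case e'_5 => rfl
  case e'_8 => funext u; simp [Phi, Finset.prod_apply]
  have hterm : ∀ k : Fin p,
      (∏ j ∈ Finset.univ.erase k, (lam j + t)⁻¹) • (-1 / (lam k + t) ^ 2)
        = -(Phi lam t * (lam k + t)⁻¹) := by
    intro k
    have hne : lam k + t ≠ 0 := (add_pos_of_pos_of_nonneg (hlam k) ht).ne'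
    have hmul : (lam k + t)⁻¹ * ∏ j ∈ Finset.univ.erase k, (lam j + t)⁻¹ = Phi lam t := by
      simpa [Phi] using Finset.mul_prod_erase Finset.univ (fun j => (lam j + t)⁻¹)
        (Finset.mem_univ k)
    rw [smul_eq_mul, ← hmul, sq, div_eq_mul_inv, mul_inv]
    ring
  rw [Finset.sum_congr rfl (fun k _ => hterm k)]
  rw [Sm, Finset.mul_sum, ← Finset.sum_neg_distrib]

lemma Ff_nonneg (hc : 0 < c) (hlam : ∀ k, 0 < lam k) {t : ℝ} (ht : 0 ≤ t) :
    0 ≤ Ff a b c q lam t := by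
  have h1 : (0:ℝ) ≤ t ^ q := Real.rpow_nonneg ht q
  have h2 : (0:ℝ) ≤ (c + t) ^ (a + b) := Real.rpow_nonneg (by positivity) _
  exact mul_nonneg (div_nonneg h1 h2) (Phi_pos hlam ht).le

lemma Ff_contAt (hc : 0 < c) (hlam : ∀ k, 0 < lam k) {t : ℝ} (ht : 0 ≤ t)
    (hq : t ≠ 0 ∨ 0 ≤ q) : ContinuousAt (Ff a b c q lam) t := by
  have hct : 0 < c + t := add_pos_of_pos_of_nonneg hc ht
  have h1 : ContinuousAt (fun u : ℝ => u ^ q) t := Real.continuousAt_rpow_const t q hq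
  have h2 : ContinuousAt (fun u : ℝ => (c + u) ^ (a + b)) t :=
    (continuousAt_const.add continuousAt_id).rpow_const (Or.inl hct.ne')
  exact (h1.div h2 (Real.rpow_pos_of_pos hct _).ne').mul (Phi_contAt hlam ht)

lemma Ff_hasDerivAt (hc : 0 < c) (hlam : ∀ k, 0 < lam k) {t : ℝ} (ht : 0 < t) :
    HasDerivAt (Ff a b c q lam)
      (q * Ff a b c (q - 1) lam t
        - Ff a b c q lam t * ((a + b) / (c + t) + Sm lam t)) t := by
  have hct : 0 < c + t := add_pos_of_pos_of_nonneg hc ht.le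
  have h1 : HasDerivAt (fun u : ℝ => u ^ q) (q * t ^ (q - 1)) t :=
    Real.hasDerivAt_rpow_const (Or.inl ht.ne')
  have hadd : HasDerivAt (fun u : ℝ => c + u) 1 t := by
    simpa using (hasDerivAt_id t).const_add c
  have h2 : HasDerivAt (fun u : ℝ => (c + u) ^ (a + b))
      ((a + b) * (c + t) ^ (a + b - 1)) t := by
    simpa [Function.comp_def] using (Real.hasDerivAt_rpow_const (p := a + b) (Or.inl hct.ne')).comp t hadd
  have hXne : ((c + t) ^ (a + b)) ≠ 0 := (Real.rpow_pos_of_pos hct _).ne'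
  have hdiv := h1.div h2 hXne
  have h3 := Phi_hasDerivAt hlam (p := p) (lam := lam) ht.le
  have := hdiv.mul h3
  convert this using 1
  case e'_4 => rfl
  case e'_5 => rfl
  case e'_8 => rfl
  simp only [Ff, Pi.div_apply]
  have hsub : (c + t) ^ (a + b - 1) = (c + t) ^ (a + b) / (c + t) :=
    Real.rpow_sub_one hct.ne' _
  have htq : t ^ q = t ^ (q - 1) * t := by
    rw [← Real.rpow_add_one ht.ne' (q - 1)]; ring_nf
  rw [hsub, htq]
  field_simp
  ring

lemma Ff_le_small (hc : 0 < c) (hab : 0 ≤ a + b) (hlam : ∀ k, 0 < lam k) {t : ℝ} (ht : 0 ≤ t) :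
    Ff a b c q lam t ≤ Phi lam 0 / c ^ (a + b) * t ^ q := by
  have hct : 0 < c + t := add_pos_of_pos_of_nonneg hc ht
  have h1 : c ^ (a + b) ≤ (c + t) ^ (a + b) :=
    Real.rpow_le_rpow hc.le (le_add_of_nonneg_right ht) hab
  calc Ff a b c q lam t = t ^ q / (c + t) ^ (a + b) * Phi lam t := rfl
    _ ≤ t ^ q / c ^ (a + b) * Phi lam 0 := by
        refine mul_le_mul (div_le_div₀ (Real.rpow_nonneg ht _) le_rfl
          (Real.rpow_pos_of_pos hc _) h1) (Phi_le hlam ht) (Phi_pos hlam ht).le ?_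
        exact div_nonneg (Real.rpow_nonneg ht _) (Real.rpow_nonneg hc.le _)
    _ = Phi lam 0 / c ^ (a + b) * t ^ q := by ring

lemma Ff_le_big (hc : 0 < c) (hab : 0 ≤ a + b) (hlam : ∀ k, 0 < lam k) {t : ℝ} (ht : 0 < t) :
    Ff a b c q lam t ≤ t ^ (q - (a + b) - p) := by
  have h1 : t ^ (a + b) ≤ (c + t) ^ (a + b) :=
    Real.rpow_le_rpow ht.le (le_add_of_nonneg_left hc.le) hab
  have h2 : Phi lam t ≤ t ^ (-(p:ℝ)) := Phi_le_rpow hlam ht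
  calc Ff a b c q lam t = t ^ q / (c + t) ^ (a + b) * Phi lam t := rfl
    _ ≤ t ^ q / t ^ (a + b) * t ^ (-(p:ℝ)) := by
        refine mul_le_mul (div_le_div₀ (Real.rpow_nonneg ht.le _) le_rfl
          (Real.rpow_pos_of_pos ht _) h1) h2 (Phi_pos hlam ht.le).le ?_
        exact div_nonneg (Real.rpow_nonneg ht.le _) (Real.rpow_nonneg ht.le _)
    _ = t ^ (q - (a + b) - p) := by
        rw [← Real.rpow_sub ht, ← Real.rpow_add ht, ← sub_eq_add_neg]

end Stmt2Aux

open Stmt2Aux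

set_option maxHeartbeats 1000000 in
theorem stmt_2 (a b c : ℝ) (ha : 0 < a) (hb : 0 < b) (hc : 0 < c)
    (p : ℕ) (lam : Fin p → ℝ) (hlam : ∀ k, 0 < lam k) :
    (∫ t in Set.Ioi (0:ℝ), t ^ ((p:ℝ)/2 + a - 1) / (c + t) ^ (a + b) * ∏ k, 1 / (lam k + t))
      = ∫ t in Set.Ioi (0:ℝ), t ^ ((p:ℝ)/2 + a - 1) / (c + t) ^ (a + b) * (∏ k, 1 / (lam k + t))
          * (t / ((p:ℝ)/2 + a)) * ((a + b) / (c + t) + ∑ k, 1 / (lam k + t)) := by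
  have hq0 : (0:ℝ) < (p:ℝ)/2 + a := by positivity
  set q : ℝ := (p:ℝ)/2 + a with hqdef
  have hab : 0 < a + b := by positivity
  set G : ℝ → ℝ := Ff a b c (q - 1) lam with hGdef
  set F : ℝ → ℝ := Ff a b c q lam with hFdef
  set A : ℝ → ℝ := fun t => (a + b) / (c + t) + Sm lam t with hAdef
  set H : ℝ → ℝ := fun t => F t * A t with hHdef
  -- exponent at infinity
  have hrlt : q - 1 - (a + b) - (p:ℝ) < -1 := by
    rw [hqdef]; push_cast; nlinarith [Nat.cast_nonneg (α := ℝ) p]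
  have hs : (-1:ℝ) < q - 1 - 1 + 1 := by rw [hqdef]; nlinarith [Nat.cast_nonneg (α := ℝ) p]
  -- G measurable / continuous on Ioi 0
  have hGcont : ContinuousOn G (Set.Ioi (0:ℝ)) := fun t ht =>
    (Ff_contAt hc hlam (le_of_lt ht) (Or.inl (ne_of_gt ht))).continuousWithinAt
  have hGmeas : AEStronglyMeasurable G (volume.restrict (Set.Ioi (0:ℝ))) :=
    hGcont.aestronglyMeasurable measurableSet_Ioi
  -- integrability of G
  have hGint : IntegrableOn G (Set.Ioi (0:ℝ)) := by
    refine aux_integrable hGmeas (s := q - 1) (r := q - 1 - (a + b) - p)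
      (C1 := Phi lam 0 / c ^ (a + b)) (C2 := 1) ?_ hrlt ?_ ?_
    · rw [hqdef]; nlinarith [Nat.cast_nonneg (α := ℝ) p]
    · intro t ht
      rw [abs_of_nonneg (Ff_nonneg hc hlam ht.1.le)]
      exact Ff_le_small hc hab.le hlam ht.1.le
    · intro t ht
      rw [abs_of_nonneg (Ff_nonneg hc hlam (le_of_lt (lt_trans one_pos ht)))]
      rw [one_mul]
      exact Ff_le_big hc hab.le hlam (lt_trans one_pos ht)
  -- relation F = t * G on Ioi 0
  have hFG : ∀ t : ℝ, 0 < t → F t = t * G t := by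
    intro t ht
    simp only [hFdef, hGdef, Ff]
    rw [show q = (q - 1) + 1 by ring, Real.rpow_add_one ht.ne' (q - 1)]
    ring
  -- bound on t * A t
  have hA_nonneg : ∀ t : ℝ, 0 ≤ t → 0 ≤ A t := by
    intro t ht
    have hct : 0 < c + t := add_pos_of_pos_of_nonneg hc ht
    exact add_nonneg (by positivity) (Sm_nonneg hlam ht)
  have hAbound : ∀ t : ℝ, 0 < t → t * A t ≤ a + b + p := by
    intro t ht
    have hct : 0 < c + t := add_pos_of_pos_of_nonneg hc ht.le
    have h1 : t * ((a + b) / (c + t)) ≤ a + b := by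
      rw [mul_div_assoc']
      rw [div_le_iff₀ hct]
      nlinarith
    have h2 : t * Sm lam t ≤ p := by
      rw [Sm, Finset.mul_sum]
      calc (∑ k : Fin p, t * (lam k + t)⁻¹) ≤ ∑ _k : Fin p, 1 := by
            refine Finset.sum_le_sum fun k _ => ?_
            rw [← div_eq_mul_inv]
            exact div_le_one_of_le₀ (le_add_of_nonneg_left (hlam k).le)
              (add_pos_of_pos_of_nonneg (hlam k) ht.le).le
        _ = p := by simp
    calc t * A t = t * ((a + b) / (c + t)) + t * Sm lam t := by rw [hAdef]; ring
      _ ≤ (a + b) + p := add_le_add h1 h2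
  -- integrability of H
  have hHcont : ContinuousOn H (Set.Ioi (0:ℝ)) := by
    intro t ht
    have hF : ContinuousAt F t := Ff_contAt hc hlam (le_of_lt ht) (Or.inl (ne_of_gt ht))
    have hct : 0 < c + t := add_pos_of_pos_of_nonneg hc (le_of_lt ht)
    have hA : ContinuousAt A t :=
      ((continuousAt_const.div (continuousAt_const.add continuousAt_id) hct.ne').add
        (Sm_contAt hlam (le_of_lt ht)))
    exact (hF.mul hA).continuousWithinAt
  have hH_nonneg : ∀ t : ℝ, 0 < t → 0 ≤ H t := fun t ht =>
    mul_nonneg (Ff_nonneg hc hlam ht.le) (hA_nonneg t ht.le)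
  have hH_le : ∀ t : ℝ, 0 < t → H t ≤ (a + b + p) * G t := by
    intro t ht
    have hGnn : 0 ≤ G t := Ff_nonneg hc hlam ht.le
    calc H t = G t * (t * A t) := by simp only [hHdef]; rw [hFG t ht]; ring
      _ ≤ G t * (a + b + p) := by
          refine mul_le_mul_of_nonneg_left (hAbound t ht) hGnn
      _ = (a + b + p) * G t := by ring
  have hHint : IntegrableOn H (Set.Ioi (0:ℝ)) := by
    refine (hGint.const_mul (a + b + p)).mono'
      (hHcont.aestronglyMeasurable measurableSet_Ioi) ?_
    rw [ae_restrict_iff' measurableSet_Ioi]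
    refine ae_of_all _ fun t ht => ?_
    rw [Real.norm_eq_abs, abs_of_nonneg (hH_nonneg t ht)]
    exact hH_le t ht
  -- derivative
  have hderiv : ∀ t ∈ Set.Ioi (0:ℝ), HasDerivAt F (q * G t - H t) t := fun t ht =>
    Ff_hasDerivAt hc hlam ht
  -- continuity at 0 and value
  have hcont0 : ContinuousWithinAt F (Set.Ici (0:ℝ)) 0 :=
    (Ff_contAt hc hlam le_rfl (Or.inr hq0.le)).continuousWithinAt
  have hF0 : F 0 = 0 := by
    simp [hFdef, Ff, Real.zero_rpow hq0.ne']
  -- limit at infinity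
  have htop : Tendsto F atTop (𝓝 0) := by
    have hexp : q - (a + b) - (p:ℝ) = -((p:ℝ)/2 + b) := by rw [hqdef]; push_cast; ring
    have hlim : Tendsto (fun t : ℝ => t ^ (q - (a + b) - (p:ℝ))) atTop (𝓝 0) := by
      rw [hexp]
      exact tendsto_rpow_neg_atTop (by positivity)
    refine squeeze_zero' ?_ ?_ hlim
    · filter_upwards [eventually_gt_atTop (0:ℝ)] with t ht
      exact Ff_nonneg hc hlam ht.le
    · filter_upwards [eventually_gt_atTop (0:ℝ)] with t ht
      exact Ff_le_big hc hab.le hlam ht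
  -- FTC
  have hint' : IntegrableOn (fun t => q * G t - H t) (Set.Ioi (0:ℝ)) :=
    (hGint.const_mul q).sub hHint
  have key : (∫ t in Set.Ioi (0:ℝ), (q * G t - H t)) = 0 - F 0 :=
    integral_Ioi_of_hasDerivAt_of_tendsto hcont0 hderiv hint' htop
  rw [hF0, sub_zero] at key
  rw [integral_sub (hGint.const_mul q) hHint, integral_const_mul, sub_eq_zero] at key
  -- rewrite both sides of the goal
  have hLHS : (∫ t in Set.Ioi (0:ℝ),
      t ^ ((p:ℝ)/2 + a - 1) / (c + t) ^ (a + b) * ∏ k, 1 / (lam k + t))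
      = ∫ t in Set.Ioi (0:ℝ), G t := by
    refine setIntegral_congr_fun measurableSet_Ioi fun t ht => ?_
    simp only [hGdef, Ff, Phi, one_div, ← hqdef]
  have hRHS : (∫ t in Set.Ioi (0:ℝ),
      t ^ ((p:ℝ)/2 + a - 1) / (c + t) ^ (a + b) * (∏ k, 1 / (lam k + t))
        * (t / ((p:ℝ)/2 + a)) * ((a + b) / (c + t) + ∑ k, 1 / (lam k + t)))
      = ∫ t in Set.Ioi (0:ℝ), H t / q := by
    refine setIntegral_congr_fun measurableSet_Ioi fun t ht => ?_
    have ht' : (0:ℝ) < t := ht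
    simp only [hHdef]
    rw [hFG t ht']
    simp only [hGdef, hAdef, Ff, Phi, Sm, one_div, ← hqdef]
    ring
  rw [hLHS, hRHS, integral_div, ← key, mul_div_cancel_left₀ _ hq0.ne']
end

section
/- For a > 0, c > 0, fixed exponents A > 0 and B > a (with B − a > 0), and γ > 0: the ratio E(λ) := [∫₀^∞ (t/(γ+t))^{C} · t^{A−1}/(c+t)^{a+b} · (λ+t)^{−B} dt] / [∫₀^∞ t^{A−1}/(c+t)^{a+b} · (λ+t)^{−B} dt] tends to 0 as λ → 0⁺, where C = min{1, B − A}/2 ∈ (0,1) and all integrals are finite. In particular, in the notation of Lemma S-median, E[τ²/(γ+τ²) | λ̃²] → 0 as λ̃*² → 0. -/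
set_option maxHeartbeats 1000000

open MeasureTheory Set Filter Real

lemma contOn_rpow_shift (d p : ℝ) (hd : 0 ≤ d) :
    ContinuousOn (fun t : ℝ => (d + t) ^ p) (Set.Ioi 0) := by
  intro x hx
  simp only [Set.mem_Ioi] at hx
  have h0 : d + x ≠ 0 := by linarith
  exact (ContinuousAt.comp (Real.continuousAt_rpow_const (d + x) p (Or.inl h0))
    (continuous_const.add continuous_id).continuousAt).continuousWithinAt

lemma contOn_rpow (p : ℝ) : ContinuousOn (fun t : ℝ => t ^ p) (Set.Ioi 0) := by
  simpa using contOn_rpow_shift 0 p le_rfl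

lemma contOn_rpow_affine (d e p : ℝ) (hd : 0 < d) (he : 0 ≤ e) :
    ContinuousOn (fun t : ℝ => (d + e * t) ^ p) (Set.Ioi 0) := by
  intro x hx
  simp only [Set.mem_Ioi] at hx
  have h0 : d + e * x ≠ 0 := by nlinarith
  exact (((continuous_const.add (continuous_const.mul continuous_id)).continuousAt (x := x)).rpow_const
    (Or.inl h0)).continuousWithinAt

lemma helper_int {A β : ℝ} (hA : 0 < A) (hAβ : A < β) :
    IntegrableOn (fun u : ℝ => u ^ (A-1) * (1+u) ^ (-β)) (Set.Ioi 0) := by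
  have hmeas : AEStronglyMeasurable (fun u : ℝ => u ^ (A-1) * (1+u) ^ (-β))
      (volume.restrict (Set.Ioi (0:ℝ))) :=
    (((contOn_rpow (A-1)).mul (contOn_rpow_shift 1 (-β) zero_le_one))).aestronglyMeasurable
      measurableSet_Ioi
  have h01 : IntegrableOn (fun u : ℝ => u ^ (A-1) * (1+u) ^ (-β)) (Set.Ioc 0 1) := by
    have hint : IntegrableOn (fun u : ℝ => u ^ (A-1)) (Set.Ioc 0 1) := by
      have := intervalIntegral.intervalIntegrable_rpow' (a := 0) (b := 1) (r := A-1)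
        (by linarith)
      rwa [intervalIntegrable_iff, Set.uIoc_of_le zero_le_one] at this
    apply Integrable.mono' hint (hmeas.mono_set Set.Ioc_subset_Ioi_self)
    filter_upwards [ae_restrict_mem measurableSet_Ioc] with u hu
    have h1u : (0:ℝ) ≤ 1 + u := by linarith [hu.1]
    rw [norm_mul, Real.norm_rpow_of_nonneg hu.1.le, Real.norm_rpow_of_nonneg h1u,
      Real.norm_of_nonneg hu.1.le, Real.norm_of_nonneg h1u]
    calc u ^ (A-1) * (1+u) ^ (-β) ≤ u ^ (A-1) * 1 := by
          apply mul_le_mul_of_nonneg_left _ (Real.rpow_nonneg hu.1.le _)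
          exact Real.rpow_le_one_of_one_le_of_nonpos (by linarith [hu.1]) (by linarith)
      _ = u ^ (A-1) := mul_one _
  have h1i : IntegrableOn (fun u : ℝ => u ^ (A-1) * (1+u) ^ (-β)) (Set.Ioi 1) := by
    have hint : IntegrableOn (fun u : ℝ => u ^ (A-1-β)) (Set.Ioi 1) :=
      integrableOn_Ioi_rpow_of_lt (by linarith) one_pos
    apply Integrable.mono' hint (hmeas.mono_set (Set.Ioi_subset_Ioi zero_le_one))
    filter_upwards [ae_restrict_mem measurableSet_Ioi] with u hu
    have hu0 : (0:ℝ) < u := lt_trans one_pos hu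
    have h1u : (0:ℝ) ≤ 1 + u := by linarith
    rw [norm_mul, Real.norm_rpow_of_nonneg hu0.le, Real.norm_rpow_of_nonneg h1u,
      Real.norm_of_nonneg hu0.le, Real.norm_of_nonneg h1u]
    calc u ^ (A-1) * (1+u) ^ (-β) ≤ u ^ (A-1) * u ^ (-β) :=
          mul_le_mul_of_nonneg_left
            (Real.rpow_le_rpow_of_nonpos hu0 (by linarith) (by linarith))
            (Real.rpow_nonneg hu0.le _)
      _ = u ^ (A-1-β) := by rw [← Real.rpow_add hu0]; ring_nf
  have hun : IntegrableOn (fun u : ℝ => u ^ (A-1) * (1+u) ^ (-β))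
      (Set.Ioc 0 1 ∪ Set.Ioi 1) := h01.union h1i
  apply hun.mono_set
  intro x hx
  rcases le_or_gt x 1 with h | h
  · exact Or.inl ⟨hx, h⟩
  · exact Or.inr h

lemma int_J {c p A β lam : ℝ} (hc : 0 < c) (hp : 0 ≤ p) (hlam : 0 ≤ lam)
    (hA : 0 < A) (hAβ : A < β) :
    IntegrableOn (fun u : ℝ => u ^ (A-1) / (c + lam*u) ^ p * (1+u) ^ (-β)) (Set.Ioi 0) := by
  have hmeas : AEStronglyMeasurable
      (fun u : ℝ => u ^ (A-1) / (c + lam*u) ^ p * (1+u) ^ (-β))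
      (volume.restrict (Set.Ioi (0:ℝ))) := by
    apply ContinuousOn.aestronglyMeasurable _ measurableSet_Ioi
    apply ContinuousOn.mul _ (contOn_rpow_shift 1 (-β) zero_le_one)
    apply ContinuousOn.div (contOn_rpow (A-1)) (contOn_rpow_affine c lam p hc hlam)
    intro x hx
    simp only [Set.mem_Ioi] at hx
    have : (0:ℝ) < c + lam * x := by nlinarith
    exact (Real.rpow_pos_of_pos this p).ne'
  apply Integrable.mono' ((helper_int hA hAβ).const_mul (c ^ (-p))) hmeas
  filter_upwards [ae_restrict_mem measurableSet_Ioi] with u hu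
  simp only [Set.mem_Ioi] at hu
  have h1u : (0:ℝ) ≤ 1 + u := by linarith
  have hclu : (0:ℝ) < c + lam * u := by nlinarith
  have hnn : 0 ≤ u ^ (A-1) / (c + lam*u) ^ p * (1+u) ^ (-β) :=
    mul_nonneg (div_nonneg (Real.rpow_nonneg hu.le _) (Real.rpow_nonneg hclu.le _))
      (Real.rpow_nonneg h1u _)
  rw [Real.norm_of_nonneg hnn]
  have hdiv : u ^ (A-1) / (c + lam*u) ^ p ≤ c ^ (-p) * u ^ (A-1) := by
    have h1 : u ^ (A-1) / (c + lam*u) ^ p ≤ u ^ (A-1) / c ^ p :=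
      div_le_div_of_nonneg_left (Real.rpow_nonneg hu.le _) (Real.rpow_pos_of_pos hc _)
        (Real.rpow_le_rpow hc.le (by nlinarith) hp)
    calc u ^ (A-1) / (c + lam*u) ^ p ≤ u ^ (A-1) / c ^ p := h1
      _ = c ^ (-p) * u ^ (A-1) := by
          rw [Real.rpow_neg hc.le, div_eq_mul_inv]; ring
  calc u ^ (A-1) / (c + lam*u) ^ p * (1+u) ^ (-β)
      ≤ c ^ (-p) * u ^ (A-1) * (1+u) ^ (-β) :=
        mul_le_mul_of_nonneg_right hdiv (Real.rpow_nonneg h1u _)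
    _ = c ^ (-p) * (u ^ (A-1) * (1+u) ^ (-β)) := by ring

lemma sub_eq (f : ℝ → ℝ) {lam : ℝ} (hlam : 0 < lam) :
    ∫ t in Set.Ioi (0:ℝ), f t = lam * ∫ u in Set.Ioi (0:ℝ), f (lam * u) := by
  rw [MeasureTheory.integral_comp_mul_left_Ioi f 0 hlam, mul_zero, smul_eq_mul,
    ← mul_assoc, mul_inv_cancel₀ hlam.ne', one_mul]

theorem stmt_13 (a b c γ A B : ℝ) (ha : 0 < a) (hb : 0 < b) (hc : 0 < c) (hγ : 0 < γ)
    (hA : 0 < A) (hB : A < B) :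
    Filter.Tendsto (fun lam : ℝ =>
        (∫ t in Set.Ioi (0:ℝ),
            (t / (γ + t)) ^ (min 1 (B - A) / 2) * (t ^ (A - 1) / (c + t) ^ (a + b))
              * (lam + t) ^ (-B))
          / (∫ t in Set.Ioi (0:ℝ), t ^ (A - 1) / (c + t) ^ (a + b) * (lam + t) ^ (-B)))
      (nhdsWithin 0 (Set.Ioi 0)) (nhds 0) := by
  set C : ℝ := min 1 (B - A) / 2 with hCdef
  have hBA : 0 < B - A := by linarith
  have hC0 : 0 < C := by
    rw [hCdef]; have := lt_min one_pos hBA; linarith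
  have hmin : min 1 (B - A) ≤ B - A := min_le_right _ _
  have hACB : A + C < B := by rw [hCdef] at *; linarith
  have hp : (0:ℝ) < a + b := by linarith
  -- constants
  set Kint : ℝ := ∫ u in Set.Ioi (0:ℝ), u ^ (A + C - 1) * (1+u) ^ (-B) with hKdef
  set M : ℝ := c ^ (-(a+b)) * Kint with hMdef
  set m : ℝ := ∫ u in Set.Ioi (0:ℝ), u ^ (A-1) / (c + u) ^ (a+b) * (1+u) ^ (-B) with hmdef
  have hm_int : IntegrableOn (fun u : ℝ => u ^ (A-1) / (c + u) ^ (a+b) * (1+u) ^ (-B))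
      (Set.Ioi 0) := by
    have := int_J (c := c) (p := a+b) (A := A) (β := B) (lam := 1) hc hp.le zero_le_one hA hB
    simpa using this
  have hm_pos : 0 < m := by
    rw [hmdef]
    rw [setIntegral_pos_iff_support_of_nonneg_ae _ hm_int]
    · apply lt_of_lt_of_le _ (measure_mono (s := Set.Ioi (1:ℝ)) _)
      · simp [Real.volume_Ioi]
      · intro x hx
        simp only [Set.mem_Ioi] at hx
        have hx0 : (0:ℝ) < x := lt_trans one_pos hx
        constructor
        · apply ne_of_gt
          have h1 : (0:ℝ) < x ^ (A-1) / (c + x) ^ (a+b) :=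
            div_pos (Real.rpow_pos_of_pos hx0 _) (Real.rpow_pos_of_pos (by linarith) _)
          exact mul_pos h1 (Real.rpow_pos_of_pos (by linarith) _)
        · exact Set.mem_Ioi.mpr hx0
    · filter_upwards [ae_restrict_mem measurableSet_Ioi] with u hu
      simp only [Set.mem_Ioi] at hu
      exact mul_nonneg (div_nonneg (Real.rpow_nonneg hu.le _)
        (Real.rpow_nonneg (by linarith) _)) (Real.rpow_nonneg (by linarith) _)
  -- tendsto of the bound
  have hbound_tendsto : Filter.Tendsto (fun lam : ℝ => γ ^ (-C) * M / m * lam ^ C)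
      (nhdsWithin 0 (Set.Ioi 0)) (nhds 0) := by
    have h1 : Filter.Tendsto (fun lam : ℝ => lam ^ C) (nhdsWithin 0 (Set.Ioi 0)) (nhds 0) := by
      have h2 := (Real.continuousAt_rpow_const 0 C (Or.inr hC0.le)).tendsto
      rw [Real.zero_rpow hC0.ne'] at h2
      exact h2.mono_left nhdsWithin_le_nhds
    have := h1.const_mul (γ ^ (-C) * M / m)
    simpa using this
  have key : ∀ lam : ℝ, lam ∈ Set.Ioo (0:ℝ) 1 →
      0 ≤ (∫ t in Set.Ioi (0:ℝ),
            (t / (γ + t)) ^ C * (t ^ (A - 1) / (c + t) ^ (a + b)) * (lam + t) ^ (-B))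
          / (∫ t in Set.Ioi (0:ℝ), t ^ (A - 1) / (c + t) ^ (a + b) * (lam + t) ^ (-B)) ∧
      (∫ t in Set.Ioi (0:ℝ),
            (t / (γ + t)) ^ C * (t ^ (A - 1) / (c + t) ^ (a + b)) * (lam + t) ^ (-B))
          / (∫ t in Set.Ioi (0:ℝ), t ^ (A - 1) / (c + t) ^ (a + b) * (lam + t) ^ (-B))
        ≤ γ ^ (-C) * M / m * lam ^ C := by
    intro lam hlam
    obtain ⟨hlam0, hlam1⟩ := hlam
    -- substitution for numerator
    have hNsub : (∫ t in Set.Ioi (0:ℝ),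
        (t / (γ + t)) ^ C * (t ^ (A - 1) / (c + t) ^ (a + b)) * (lam + t) ^ (-B))
        = lam ^ (A - B) * ∫ u in Set.Ioi (0:ℝ),
          (lam*u / (γ + lam*u)) ^ C * (u ^ (A - 1) / (c + lam*u) ^ (a + b)) * (1+u) ^ (-B) := by
      rw [sub_eq (fun t => (t / (γ + t)) ^ C * (t ^ (A - 1) / (c + t) ^ (a + b))
        * (lam + t) ^ (-B)) hlam0]
      rw [setIntegral_congr_fun measurableSet_Ioi (g := fun u =>
        lam ^ (A - 1 - B) * ((lam*u / (γ + lam*u)) ^ C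
          * (u ^ (A - 1) / (c + lam*u) ^ (a + b)) * (1+u) ^ (-B)))]
      · rw [integral_const_mul, ← mul_assoc]
        congr 1
        rw [show A - B = 1 + (A - 1 - B) by ring, Real.rpow_add hlam0, Real.rpow_one]
      · intro u hu
        simp only [Set.mem_Ioi] at hu
        simp only
        rw [Real.mul_rpow hlam0.le hu.le, show lam + lam*u = lam*(1+u) by ring,
          Real.mul_rpow hlam0.le (by linarith : (0:ℝ) ≤ 1+u),
          show A - 1 - B = (A-1) + (-B) by ring, Real.rpow_add hlam0]
        ring
    -- substitution for denominator
    have hDsub : (∫ t in Set.Ioi (0:ℝ), t ^ (A - 1) / (c + t) ^ (a + b) * (lam + t) ^ (-B))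
        = lam ^ (A - B) * ∫ u in Set.Ioi (0:ℝ),
          u ^ (A - 1) / (c + lam*u) ^ (a + b) * (1+u) ^ (-B) := by
      rw [sub_eq (fun t => t ^ (A - 1) / (c + t) ^ (a + b) * (lam + t) ^ (-B)) hlam0]
      rw [setIntegral_congr_fun measurableSet_Ioi (g := fun u =>
        lam ^ (A - 1 - B) * (u ^ (A - 1) / (c + lam*u) ^ (a + b) * (1+u) ^ (-B)))]
      · rw [integral_const_mul, ← mul_assoc]
        congr 1
        rw [show A - B = 1 + (A - 1 - B) by ring, Real.rpow_add hlam0, Real.rpow_one]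
      · intro u hu
        simp only [Set.mem_Ioi] at hu
        simp only
        rw [Real.mul_rpow hlam0.le hu.le, show lam + lam*u = lam*(1+u) by ring,
          Real.mul_rpow hlam0.le (by linarith : (0:ℝ) ≤ 1+u),
          show A - 1 - B = (A-1) + (-B) by ring, Real.rpow_add hlam0]
        ring
    set Nh : ℝ := ∫ u in Set.Ioi (0:ℝ),
      (lam*u / (γ + lam*u)) ^ C * (u ^ (A - 1) / (c + lam*u) ^ (a + b)) * (1+u) ^ (-B)
      with hNhdef
    set Dh : ℝ := ∫ u in Set.Ioi (0:ℝ),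
      u ^ (A - 1) / (c + lam*u) ^ (a + b) * (1+u) ^ (-B) with hDhdef
    have hNh0 : 0 ≤ Nh := by
      rw [hNhdef]
      apply setIntegral_nonneg measurableSet_Ioi
      intro u hu
      simp only [Set.mem_Ioi] at hu
      have hγu : (0:ℝ) < γ + lam*u := by nlinarith
      have hcu : (0:ℝ) < c + lam*u := by nlinarith
      exact mul_nonneg (mul_nonneg (Real.rpow_nonneg (by positivity) _)
        (div_nonneg (Real.rpow_nonneg hu.le _) (Real.rpow_nonneg hcu.le _)))
        (Real.rpow_nonneg (by linarith) _)
    have hDge : m ≤ Dh := by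
      rw [hmdef, hDhdef]
      apply integral_mono_of_nonneg
      · filter_upwards [ae_restrict_mem measurableSet_Ioi] with u hu
        simp only [Set.mem_Ioi] at hu
        exact mul_nonneg (div_nonneg (Real.rpow_nonneg hu.le _)
          (Real.rpow_nonneg (by linarith) _)) (Real.rpow_nonneg (by linarith) _)
      · exact int_J hc hp.le hlam0.le hA hB
      · filter_upwards [ae_restrict_mem measurableSet_Ioi] with u hu
        simp only [Set.mem_Ioi] at hu
        have hcu : (0:ℝ) < c + lam*u := by nlinarith
        have hle : (c + lam*u) ^ (a+b) ≤ (c + u) ^ (a+b) :=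
          Real.rpow_le_rpow hcu.le (by nlinarith) hp.le
        have : u ^ (A-1) / (c + u) ^ (a+b) ≤ u ^ (A-1) / (c + lam*u) ^ (a+b) :=
          div_le_div_of_nonneg_left (Real.rpow_nonneg hu.le _)
            (Real.rpow_pos_of_pos hcu _) hle
        exact mul_le_mul_of_nonneg_right this (Real.rpow_nonneg (by linarith) _)
    have hDh0 : 0 < Dh := lt_of_lt_of_le hm_pos hDge
    have hNhle : Nh ≤ γ ^ (-C) * lam ^ C * M := by
      rw [hNhdef]
      have hub : (∫ u in Set.Ioi (0:ℝ), γ ^ (-C) * lam ^ C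
          * (c ^ (-(a+b)) * (u ^ (A + C - 1) * (1+u) ^ (-B))))
          = γ ^ (-C) * lam ^ C * M := by
        rw [integral_const_mul, integral_const_mul, hMdef, hKdef]
      rw [← hub]
      apply integral_mono_of_nonneg
      · filter_upwards [ae_restrict_mem measurableSet_Ioi] with u hu
        simp only [Set.mem_Ioi] at hu
        have hγu : (0:ℝ) < γ + lam*u := by nlinarith
        have hcu : (0:ℝ) < c + lam*u := by nlinarith
        exact mul_nonneg (mul_nonneg (Real.rpow_nonneg (by positivity) _)
          (div_nonneg (Real.rpow_nonneg hu.le _) (Real.rpow_nonneg hcu.le _)))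
          (Real.rpow_nonneg (by linarith) _)
      · exact (((helper_int (by linarith : (0:ℝ) < A + C) hACB).const_mul
          (c ^ (-(a+b)))).const_mul (γ ^ (-C) * lam ^ C))
      · filter_upwards [ae_restrict_mem measurableSet_Ioi] with u hu
        simp only [Set.mem_Ioi] at hu
        have hγu : (0:ℝ) < γ + lam*u := by nlinarith
        have hcu : (0:ℝ) < c + lam*u := by nlinarith
        have h1u : (0:ℝ) ≤ 1 + u := by linarith
        have e1 : (lam*u / (γ + lam*u)) ^ C ≤ γ ^ (-C) * lam ^ C * u ^ C := by
          calc (lam*u / (γ + lam*u)) ^ C ≤ (lam*u / γ) ^ C := by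
                apply Real.rpow_le_rpow (by positivity) _ hC0.le
                exact div_le_div_of_nonneg_left (by positivity) hγ (by nlinarith)
            _ = (lam*u) ^ C / γ ^ C := Real.div_rpow (by positivity) hγ.le C
            _ = lam ^ C * u ^ C / γ ^ C := by rw [Real.mul_rpow hlam0.le hu.le]
            _ = γ ^ (-C) * lam ^ C * u ^ C := by
                rw [Real.rpow_neg hγ.le, div_eq_mul_inv]; ring
        have e2 : u ^ (A-1) / (c + lam*u) ^ (a+b) ≤ c ^ (-(a+b)) * u ^ (A-1) := by
          calc u ^ (A-1) / (c + lam*u) ^ (a+b) ≤ u ^ (A-1) / c ^ (a+b) :=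
                div_le_div_of_nonneg_left (Real.rpow_nonneg hu.le _)
                  (Real.rpow_pos_of_pos hc _)
                  (Real.rpow_le_rpow hc.le (by nlinarith) hp.le)
            _ = c ^ (-(a+b)) * u ^ (A-1) := by
                rw [Real.rpow_neg hc.le, div_eq_mul_inv]; ring
        calc (lam*u / (γ + lam*u)) ^ C * (u ^ (A - 1) / (c + lam*u) ^ (a + b)) * (1+u) ^ (-B)
            ≤ (γ ^ (-C) * lam ^ C * u ^ C) * (c ^ (-(a+b)) * u ^ (A-1)) * (1+u) ^ (-B) := by
              apply mul_le_mul_of_nonneg_right _ (Real.rpow_nonneg h1u _)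
              apply mul_le_mul e1 e2
                (div_nonneg (Real.rpow_nonneg hu.le _) (Real.rpow_nonneg hcu.le _))
                (by positivity)
          _ = γ ^ (-C) * lam ^ C * (c ^ (-(a+b)) * (u ^ (A + C - 1) * (1+u) ^ (-B))) := by
              rw [show A + C - 1 = C + (A - 1) by ring, Real.rpow_add hu]
              ring
    -- combine
    rw [hNsub, hDsub, mul_div_mul_left _ _ (Real.rpow_pos_of_pos hlam0 (A-B)).ne']
    refine ⟨div_nonneg hNh0 hDh0.le, ?_⟩
    calc Nh / Dh ≤ (γ ^ (-C) * lam ^ C * M) / m := by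
          apply div_le_div₀ _ hNhle hm_pos hDge
          have hM0 : 0 ≤ M := by
            rw [hMdef, hKdef]
            apply mul_nonneg (Real.rpow_nonneg hc.le _)
            apply setIntegral_nonneg measurableSet_Ioi
            intro u hu
            simp only [Set.mem_Ioi] at hu
            exact mul_nonneg (Real.rpow_nonneg hu.le _)
              (Real.rpow_nonneg (by linarith) _)
          positivity
      _ = γ ^ (-C) * M / m * lam ^ C := by ring

  apply tendsto_of_tendsto_of_tendsto_of_le_of_le' tendsto_const_nhds hbound_tendsto
  · filter_upwards [Ioo_mem_nhdsGT (one_pos : (0:ℝ) < 1)] with lam h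
    exact (key lam h).1
  · filter_upwards [Ioo_mem_nhdsGT (one_pos : (0:ℝ) < 1)] with lam h
    exact (key lam h).2
end

section
/- For all s ≥ 1 and r > 1 and x ∈ ℝ: e^{−x²/2}/(r² + (x−s)²) · 1(x < s/2) ≤ 5 · ( sup_{s̃ ≥ 1} [∫_{−∞}^{s̃/2} e^{−u²/2} du / ∫_{0}^{s̃/2} e^{−u²/2} du] ) · ( ∫_{0}^{s/2} e^{−u²/2}/(r²+(u−s)²) du ) · TN(x), where TN is the density of the standard normal truncated to (−∞, s/2). -/
open MeasureTheory Real

lemma gauss_int : Integrable (fun u : ℝ => Real.exp (-u^2/2)) := by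
  have := integrable_exp_neg_mul_sq (b := (1/2:ℝ)) (by norm_num)
  convert this using 2 with u; ring_nf

lemma gauss_pos_Iio (c : ℝ) : 0 < ∫ u in Set.Iio c, Real.exp (-u^2/2) := by
  rw [setIntegral_pos_iff_support_of_nonneg_ae]
  · have : (Function.support fun u : ℝ => Real.exp (-u^2/2)) = Set.univ := by
      ext u; simp [Function.support, Real.exp_ne_zero]
    rw [this, Set.univ_inter]; simp [Real.volume_Iio]
  · filter_upwards with u using (Real.exp_pos _).le
  · exact gauss_int.integrableOn

lemma gauss_pos_Ioo (a b : ℝ) (h : a < b) : 0 < ∫ u in Set.Ioo a b, Real.exp (-u^2/2) := by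
  rw [setIntegral_pos_iff_support_of_nonneg_ae]
  · have : (Function.support fun u : ℝ => Real.exp (-u^2/2)) = Set.univ := by
      ext u; simp [Function.support, Real.exp_ne_zero]
    rw [this, Set.univ_inter]; simpa using h
  · filter_upwards with u using (Real.exp_pos _).le
  · exact gauss_int.integrableOn

lemma sup_ge (s : ℝ) (hs : 1 ≤ s) :
    (∫ u in Set.Iio (s/2), Real.exp (-u^2/2)) / (∫ u in Set.Ioo (0:ℝ) (s/2), Real.exp (-u^2/2))
      ≤ ⨆ t : {u : ℝ // 1 ≤ u}, (∫ u in Set.Iio ((t:ℝ)/2), Real.exp (-u^2/2))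
              / (∫ u in Set.Ioo (0:ℝ) ((t:ℝ)/2), Real.exp (-u^2/2)) := by
  have hbdd : BddAbove (Set.range fun t : {u : ℝ // 1 ≤ u} =>
      (∫ u in Set.Iio ((t:ℝ)/2), Real.exp (-u^2/2))
        / (∫ u in Set.Ioo (0:ℝ) ((t:ℝ)/2), Real.exp (-u^2/2))) := by
    refine ⟨(∫ u : ℝ, Real.exp (-u^2/2)) / (∫ u in Set.Ioo (0:ℝ) (1/2), Real.exp (-u^2/2)), ?_⟩
    rintro _ ⟨t, rfl⟩
    refine div_le_div₀ (by positivity) ?_ (gauss_pos_Ioo 0 (1/2) (by norm_num)) ?_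
    · exact setIntegral_le_integral gauss_int
        (by filter_upwards with u using (Real.exp_pos _).le)
    · refine setIntegral_mono_set gauss_int.integrableOn
        (by filter_upwards with u using (Real.exp_pos _).le) ?_
      exact Filter.Eventually.of_forall (Set.Ioo_subset_Ioo le_rfl (by linarith [t.2]))
  exact le_ciSup hbdd ⟨s, hs⟩

lemma ratio_int (s r : ℝ) (hr : 1 < r) :
    IntegrableOn (fun u : ℝ => Real.exp (-u^2/2) / (r^2 + (u - s)^2)) (Set.Ioo 0 (s/2)) := by
  have hc : Continuous fun u : ℝ => Real.exp (-u^2/2) / (r^2 + (u - s)^2) :=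
    Continuous.div (by continuity) (by continuity) (fun u => by positivity)
  exact (hc.integrableOn_Icc (a := 0) (b := s/2)).mono_set Set.Ioo_subset_Icc_self

lemma ratio_lb (s r : ℝ) (hs : 1 ≤ s) (hr : 1 < r) :
    (∫ u in Set.Ioo (0:ℝ) (s/2), Real.exp (-u^2/2)) / (r^2 + s^2)
      ≤ ∫ u in Set.Ioo (0:ℝ) (s/2), Real.exp (-u^2/2) / (r^2 + (u - s)^2) := by
  rw [← integral_div]
  refine setIntegral_mono_on ((gauss_int.integrableOn).div_const _) (ratio_int s r hr)
    measurableSet_Ioo ?_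
  intro u hu
  refine div_le_div_of_nonneg_left (Real.exp_pos _).le (by positivity) ?_
  have h1 : (u - s)^2 ≤ s^2 := sq_le_sq' (by linarith [hu.1]) (by linarith [hu.2, hs])
  linarith

theorem stmt_14 (s r : ℝ) (hs : 1 ≤ s) (hr : 1 < r) (x : ℝ) :
    Set.indicator (Set.Iio (s/2)) (fun x => Real.exp (-x^2/2) / (r^2 + (x - s)^2)) x
      ≤ 5 * (⨆ t : {u : ℝ // 1 ≤ u}, (∫ u in Set.Iio ((t:ℝ)/2), Real.exp (-u^2/2))
              / (∫ u in Set.Ioo (0:ℝ) ((t:ℝ)/2), Real.exp (-u^2/2)))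
          * (∫ u in Set.Ioo (0:ℝ) (s/2), Real.exp (-u^2/2) / (r^2 + (u - s)^2))
          * (Set.indicator (Set.Iio (s/2)) (fun x => Real.exp (-x^2/2)) x
              / ∫ u in Set.Iio (s/2), Real.exp (-u^2/2)) := by
  set S := ⨆ t : {u : ℝ // 1 ≤ u}, (∫ u in Set.Iio ((t:ℝ)/2), Real.exp (-u^2/2))
              / (∫ u in Set.Ioo (0:ℝ) ((t:ℝ)/2), Real.exp (-u^2/2)) with hSdef
  set J := ∫ u in Set.Iio (s/2), Real.exp (-u^2/2) with hJdef
  set J0 := ∫ u in Set.Ioo (0:ℝ) (s/2), Real.exp (-u^2/2) with hJ0def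
  set I := ∫ u in Set.Ioo (0:ℝ) (s/2), Real.exp (-u^2/2) / (r^2 + (u - s)^2) with hIdef
  have hJ : 0 < J := gauss_pos_Iio _
  have hJ0 : 0 < J0 := gauss_pos_Ioo 0 (s/2) (by linarith)
  have h1 : J / J0 ≤ S := sup_ge s hs
  have h2 : J0 / (r^2 + s^2) ≤ I := ratio_lb s r hs hr
  have hI : 0 < I := lt_of_lt_of_le (by positivity) h2
  by_cases hx : x ∈ Set.Iio (s/2)
  · rw [Set.indicator_of_mem hx, Set.indicator_of_mem hx]
    set E := Real.exp (-x^2/2) with hE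
    have hEpos : 0 < E := Real.exp_pos _
    have hxlt : x < s/2 := hx
    have hD : r^2 + s^2/4 ≤ r^2 + (x - s)^2 := by nlinarith
    have hDpos : (0:ℝ) < r^2 + s^2/4 := by positivity
    have key : E / (r^2 + (x - s)^2) ≤ 5 * (J / J0) * I * (E / J) := by
      have heq : 5 * (J / J0) * I * (E / J) = (5 * I / J0) * E := by
        field_simp
      rw [heq]
      have hstep : 1 / (r^2 + (x - s)^2) ≤ 5 * I / J0 := by
        have ha : 1 / (r^2 + (x - s)^2) ≤ 1 / (r^2 + s^2/4) :=
          one_div_le_one_div_of_le hDpos hD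
        have hb : 1 / (r^2 + s^2/4) ≤ 5 / (r^2 + s^2) := by
          rw [div_le_div_iff₀ hDpos (by positivity)]
          nlinarith
        have hc : 5 / (r^2 + s^2) ≤ 5 * I / J0 := by
          rw [div_le_div_iff₀ (by positivity) hJ0]
          have := (div_le_iff₀ (by positivity : (0:ℝ) < r^2 + s^2)).mp h2
          nlinarith
        linarith
      calc E / (r^2 + (x - s)^2) = (1 / (r^2 + (x - s)^2)) * E := by ring
        _ ≤ (5 * I / J0) * E := mul_le_mul_of_nonneg_right hstep hEpos.le
    calc E / (r^2 + (x - s)^2) ≤ 5 * (J / J0) * I * (E / J) := key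
      _ ≤ 5 * S * I * (E / J) := by gcongr
  · rw [Set.indicator_of_notMem hx, Set.indicator_of_notMem hx]
    simp
end
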